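/- Let (X, Σ) be a measurable space, let φ, ψ : X → ℝ be measurable functions, let μ be a probability measure on X and ν a finite measure on X. Assume that for every ε > 0 there exists a measure ρ_ε on X with ρ_ε(X) ≤ 1 such that ρ_ε(A) = ν(A) for every measurable set A ⊆ {x : φ(x) < ψ(x) − ε} and ρ_ε(A) = μ(A) for every measurable set A ⊆ {x : φ(x) > ψ(x) − ε}. Then ν({x : φ(x) < ψ(x)}) ≤ μ({x : φ(x) < ψ(x)}). -/

import Mathlib

open MeasureTheory Set

/-- abstract comparison principle from locality: if for every
`ε > 0` there is a measure of total mass at most 1 agreeing with `ν` on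
subsets of `{φ < ψ − ε}` and with `μ` on subsets of `{φ > ψ − ε}`, then
`ν {φ < ψ} ≤ μ {φ < ψ}`. -/
theorem stmt7
    {X : Type*} [MeasurableSpace X]
    (φ ψ : X → ℝ) (hφ : Measurable φ) (hψ : Measurable ψ)
    (μ ν : Measure X) [IsProbabilityMeasure μ] [IsFiniteMeasure ν]
    (hloc : ∀ ε : ℝ, 0 < ε → ∃ ρ : Measure X, ρ Set.univ ≤ 1 ∧
      (∀ A : Set X, MeasurableSet A → A ⊆ {x | φ x < ψ x - ε} → ρ A = ν A) ∧
      (∀ A : Set X, MeasurableSet A → A ⊆ {x | φ x > ψ x - ε} → ρ A = μ A)) :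
    ν {x | φ x < ψ x} ≤ μ {x | φ x < ψ x} := by
  -- key estimate for each ε > 0
  have key : ∀ ε : ℝ, 0 < ε → ν {x | φ x < ψ x - ε} ≤ μ {x | φ x < ψ x} := by
    intro ε hε
    obtain ⟨ρ, hρ1, hν, hμ⟩ := hloc ε hε
    have hmA : MeasurableSet {x | φ x ≤ ψ x - ε} :=
      measurableSet_le hφ (hψ.sub measurable_const)
    have hmS : MeasurableSet {x | φ x < ψ x - ε} :=
      measurableSet_lt hφ (hψ.sub measurable_const)
    have hcompl : {x | φ x ≤ ψ x - ε}ᶜ = {x | φ x > ψ x - ε} := by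
      ext x; simp [not_le]
    have hρμ : ρ {x | φ x ≤ ψ x - ε} ≤ μ {x | φ x ≤ ψ x - ε} := by
      have h1 : ρ {x | φ x ≤ ψ x - ε} + ρ {x | φ x ≤ ψ x - ε}ᶜ ≤
          μ {x | φ x ≤ ψ x - ε} + μ {x | φ x ≤ ψ x - ε}ᶜ := by
        rw [measure_add_measure_compl hmA, measure_add_measure_compl hmA,
          (measure_univ : μ univ = 1)]
        exact hρ1
      have h2 : ρ {x | φ x ≤ ψ x - ε}ᶜ = μ {x | φ x ≤ ψ x - ε}ᶜ := by
        apply hμ _ hmA.compl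
        rw [hcompl]
      rw [h2] at h1
      exact ENNReal.le_of_add_le_add_right (measure_ne_top μ _) h1
    calc ν {x | φ x < ψ x - ε} = ρ {x | φ x < ψ x - ε} :=
          (hν _ hmS (subset_refl _)).symm
      _ ≤ ρ {x | φ x ≤ ψ x - ε} := measure_mono fun x hx => le_of_lt (Set.mem_setOf_eq ▸ hx)
      _ ≤ μ {x | φ x ≤ ψ x - ε} := hρμ
      _ ≤ μ {x | φ x < ψ x} := measure_mono fun x hx => by
          simp only [mem_setOf_eq] at hx ⊢; linarith
  -- continuity from below for ν
  have hunion : {x | φ x < ψ x} = ⋃ n : ℕ, {x | φ x < ψ x - 1 / (n + 1)} := by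
    ext x
    simp only [mem_setOf_eq, mem_iUnion]
    constructor
    · intro hx
      obtain ⟨n, hn⟩ := exists_nat_one_div_lt (show (0:ℝ) < ψ x - φ x by linarith)
      exact ⟨n, by linarith⟩
    · rintro ⟨n, hn⟩
      have : (0:ℝ) < 1 / (n + 1) := by positivity
      linarith
  have hmono : Monotone fun n : ℕ => {x | φ x < ψ x - 1 / (n + 1)} := by
    intro m n hmn x hx
    simp only [mem_setOf_eq] at hx ⊢
    have : (1:ℝ) / (n + 1) ≤ 1 / (m + 1) := by
      apply one_div_le_one_div_of_le (by positivity)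
      have : (m:ℝ) ≤ n := Nat.cast_le.mpr hmn
      linarith
    linarith
  rw [hunion]
  rw [Directed.measure_iUnion hmono.directed_le]
  rw [← hunion]
  exact iSup_le fun n => key _ (by positivity)
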